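/- Fix p with 1 < p < 2 and 0 < ε₋ ≤ ε₊ < ∞, and fix t ≥ 0. Consider g(a) := (1/2) a^{p-2} t² + (1/p − 1/2) a^p for a > 0. Then clamp(t) := max(ε₋, min(t, ε₊)) is the unique minimizer of g on the interval [ε₋, ε₊]: for every a ∈ [ε₋, ε₊] one has g(clamp(t)) ≤ g(a), with strict inequality whenever a ≠ clamp(t). -/

import Mathlib

noncomputable def gfun (p t : ℝ) : ℝ → ℝ :=
  fun a => (1 / 2) * a ^ (p - 2) * t ^ 2 + (1 / p - 1 / 2) * a ^ p

lemma gderiv (p t a : ℝ) (hp : 1 < p) (ha : 0 < a) :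
    HasDerivAt (gfun p t) ((2 - p) / 2 * a ^ (p - 3) * (a ^ 2 - t ^ 2)) a := by
  have h1 : HasDerivAt (fun x : ℝ => x ^ (p - 2)) ((p - 2) * a ^ (p - 2 - 1)) a :=
    Real.hasDerivAt_rpow_const (Or.inl ha.ne')
  have h2 : HasDerivAt (fun x : ℝ => x ^ p) (p * a ^ (p - 1)) a :=
    Real.hasDerivAt_rpow_const (Or.inl ha.ne')
  have h := ((h1.const_mul (1 / 2)).mul_const (t ^ 2)).add (h2.const_mul (1 / p - 1 / 2))
  refine h.congr_deriv ?_
  have e1 : p - 2 - 1 = p - 3 := by ring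
  have e2 : a ^ (p - 1) = a ^ (p - 3) * a ^ 2 := by
    rw [← Real.rpow_two, ← Real.rpow_add ha]; ring_nf
  have hp0 : p ≠ 0 := by linarith
  rw [e1, e2]
  field_simp
  ring

lemma gcont (p t c d : ℝ) (hp : 1 < p) (hc : 0 < c) :
    ContinuousOn (gfun p t) (Set.Icc c d) := fun x hx =>
  (gderiv p t x hp (hc.trans_le hx.1)).continuousAt.continuousWithinAt

lemma gmono (p t c d : ℝ) (hp1 : 1 < p) (hp2 : p < 2) (hc : 0 < c) (ht : 0 ≤ t)
    (htc : t ≤ c) : StrictMonoOn (gfun p t) (Set.Icc c d) := by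
  apply strictMonoOn_of_deriv_pos (convex_Icc c d) (gcont p t c d hp1 hc)
  intro x hx
  rw [interior_Icc] at hx
  have hx0 : 0 < x := hc.trans hx.1
  rw [(gderiv p t x hp1 hx0).deriv]
  have h1 : (0:ℝ) < (2 - p) / 2 := by linarith
  have h2 : (0:ℝ) < x ^ (p - 3) := Real.rpow_pos_of_pos hx0 _
  have h3 : t ^ 2 < x ^ 2 := by nlinarith [hx.1, htc]
  have : 0 < x ^ 2 - t ^ 2 := by linarith
  exact mul_pos (mul_pos h1 h2) this

lemma ganti (p t c d : ℝ) (hp1 : 1 < p) (hp2 : p < 2) (hc : 0 < c) (ht : 0 ≤ t)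
    (htd : d ≤ t) : StrictAntiOn (gfun p t) (Set.Icc c d) := by
  apply strictAntiOn_of_deriv_neg (convex_Icc c d) (gcont p t c d hp1 hc)
  intro x hx
  rw [interior_Icc] at hx
  have hx0 : 0 < x := hc.trans hx.1
  rw [(gderiv p t x hp1 hx0).deriv]
  have h1 : (0:ℝ) < (2 - p) / 2 := by linarith
  have h2 : (0:ℝ) < x ^ (p - 3) := Real.rpow_pos_of_pos hx0 _
  have h3 : x ^ 2 < t ^ 2 := by nlinarith [hx.2, hx0]
  have h4 : x ^ 2 - t ^ 2 < 0 := by linarith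
  exact mul_neg_of_pos_of_neg (mul_pos h1 h2) h4

/-- `clamp(t) = ε₋ ∨ t ∧ ε₊` is the unique minimizer on `[ε₋, ε₊]` of
`a ↦ (1/2) a^(p-2) t² + (1/p - 1/2) a^p`. -/
theorem stmt_4 (p εm εp t : ℝ) (hp1 : 1 < p) (hp2 : p < 2)
    (hεm : 0 < εm) (hε : εm ≤ εp) (ht : 0 ≤ t) :
    ∀ a ∈ Set.Icc εm εp,
      ((1 / 2) * (max εm (min t εp)) ^ (p - 2) * t ^ 2
          + (1 / p - 1 / 2) * (max εm (min t εp)) ^ p)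
        ≤ ((1 / 2) * a ^ (p - 2) * t ^ 2 + (1 / p - 1 / 2) * a ^ p) ∧
      (a ≠ max εm (min t εp) →
        ((1 / 2) * (max εm (min t εp)) ^ (p - 2) * t ^ 2
            + (1 / p - 1 / 2) * (max εm (min t εp)) ^ p)
          < ((1 / 2) * a ^ (p - 2) * t ^ 2 + (1 / p - 1 / 2) * a ^ p)) := by
  intro a ha
  show gfun p t (max εm (min t εp)) ≤ gfun p t a ∧
      (a ≠ max εm (min t εp) → gfun p t (max εm (min t εp)) < gfun p t a)
  rcases le_or_gt t εm with h1 | h1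
  · have hMe : max εm (min t εp) = εm := by
      rw [min_eq_left (h1.trans hε), max_eq_left h1]
    rw [hMe]
    have mono := gmono p t εm εp hp1 hp2 hεm ht h1
    rcases eq_or_lt_of_le ha.1 with he | he
    · exact ⟨by rw [he], fun hne => absurd he.symm hne⟩
    · have := mono (Set.left_mem_Icc.mpr hε) ha he
      exact ⟨this.le, fun _ => this⟩
  · rcases le_or_gt εp t with h2 | h2
    · have hMe : max εm (min t εp) = εp := by
        rw [min_eq_right h2, max_eq_right hε]
      rw [hMe]
      have anti := ganti p t εm εp hp1 hp2 hεm ht h2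
      rcases eq_or_lt_of_le ha.2 with he | he
      · exact ⟨by rw [he], fun hne => absurd he hne⟩
      · have := anti ha (Set.right_mem_Icc.mpr hε) he
        exact ⟨this.le, fun _ => this⟩
    · have hMe : max εm (min t εp) = t := by
        rw [min_eq_left h2.le, max_eq_right h1.le]
      rw [hMe]
      rcases le_or_gt a t with h3 | h3
      · have anti := ganti p t εm t hp1 hp2 hεm ht le_rfl
        rcases eq_or_lt_of_le h3 with he | he
        · exact ⟨by rw [he], fun hne => absurd he hne⟩
        · have := anti ⟨ha.1, h3⟩ ⟨h1.le, le_rfl⟩ he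
          exact ⟨this.le, fun _ => this⟩
      · have mono := gmono p t t εp hp1 hp2 (hεm.trans h1) ht le_rfl
        have := mono ⟨le_rfl, h2.le⟩ ⟨h3.le, ha.2⟩ h3
        exact ⟨this.le, fun _ => this⟩
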